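/- Let C₁ > 0 and C₂ > 0, and define ξ_p, ψ, r as in the JKD setting. Then the total mass of the representing measure dλ^D = ψ(u)du + r·δ_{ξ_p} equals C₂; that is, ∫₀^{C₁} ψ(u) du + r = C₂. -/

import Mathlib

/-- The pole location ξ_p of the JKD function R^D. -/
noncomputable def xip (C₁ C₂ : ℝ) : ℝ := (C₁ + Real.sqrt (C₁ ^ 2 + 4 * C₂ ^ 2)) / 2

/-- The density ψ of the absolutely continuous part of the JKD representing measure. -/
noncomputable def psi (C₁ C₂ u : ℝ) : ℝ :=
  C₂ * Real.sqrt (u * (C₁ - u)) / (Real.pi * (C₂ ^ 2 + u * (C₁ - u)))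

/-- The strength r of the Dirac mass at ξ_p. -/
noncomputable def rres (C₁ C₂ : ℝ) : ℝ :=
  2 * C₂ * Real.sqrt (xip C₁ C₂ * (xip C₁ C₂ - C₁)) / (2 * xip C₁ C₂ - C₁)

open Real Filter Set Topology intervalIntegral in
/-- The key integral evaluation. -/
lemma psi_integral (C₁ C₂ : ℝ) (hC₁ : 0 < C₁) (hC₂ : 0 < C₂) :
    (∫ u in (0:ℝ)..C₁, psi C₁ C₂ u)
      = C₂ - 2 * C₂ ^ 2 / Real.sqrt (C₁ ^ 2 + 4 * C₂ ^ 2) := by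
  set S : ℝ := Real.sqrt (C₁ ^ 2 + 4 * C₂ ^ 2) with hSdef
  have hSpos : 0 < S := Real.sqrt_pos.2 (by positivity)
  have hS2 : S ^ 2 = C₁ ^ 2 + 4 * C₂ ^ 2 := Real.sq_sqrt (by positivity)
  have hπ : Real.pi ≠ 0 := Real.pi_ne_zero
  set F : ℝ → ℝ := fun u => C₂ / Real.pi * Real.arcsin ((2 * u - C₁) / C₁)
      - 2 * C₂ ^ 2 / (Real.pi * S)
        * Real.arctan (C₂ * (2 * u - C₁) / (S * Real.sqrt (u * (C₁ - u)))) with hFdef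
  -- derivative on Ioo
  have hderiv : ∀ x ∈ Ioo (0:ℝ) C₁, HasDerivAt F (psi C₁ C₂ x) x := by
    intro x hx
    obtain ⟨hx0, hx1⟩ := hx
    have hqpos : 0 < x * (C₁ - x) := mul_pos hx0 (by linarith)
    set sq : ℝ := Real.sqrt (x * (C₁ - x)) with hsqdef
    have hsqpos : 0 < sq := Real.sqrt_pos.2 hqpos
    have hsq2 : sq ^ 2 = x * (C₁ - x) := Real.sq_sqrt hqpos.le
    -- arcsin part
    have hy1 : (2 * x - C₁) / C₁ ≠ -1 := by
      intro h; rw [div_eq_iff hC₁.ne'] at h; linarith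
    have hy2 : (2 * x - C₁) / C₁ ≠ 1 := by
      intro h; rw [div_eq_iff hC₁.ne'] at h; linarith
    have hlin : HasDerivAt (fun u : ℝ => (2 * u - C₁) / C₁) (2 / C₁) x := by
      have := (((hasDerivAt_id x).const_mul 2).sub_const C₁).div_const C₁
      simpa using this
    have harcsin : HasDerivAt (fun u : ℝ => Real.arcsin ((2 * u - C₁) / C₁))
        (1 / Real.sqrt (1 - ((2 * x - C₁) / C₁) ^ 2) * (2 / C₁)) x :=
      by have := (Real.hasDerivAt_arcsin hy1 hy2).comp x hlin; exact this
    -- arctan part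
    have hq' : HasDerivAt (fun u : ℝ => u * (C₁ - u)) (C₁ - 2 * x) x := by
      have : HasDerivAt (fun u : ℝ => u * (C₁ - u)) (1 * (C₁ - x) + x * -1) x :=
        (hasDerivAt_id x).mul ((hasDerivAt_id x).const_sub C₁)
      convert this using 1
      ring
    have hsqrt : HasDerivAt (fun u : ℝ => Real.sqrt (u * (C₁ - u)))
        (1 / (2 * sq) * (C₁ - 2 * x)) x :=
      (Real.hasDerivAt_sqrt hqpos.ne').comp x hq'
    have hden : HasDerivAt (fun u : ℝ => S * Real.sqrt (u * (C₁ - u)))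
        (S * (1 / (2 * sq) * (C₁ - 2 * x))) x := hsqrt.const_mul S
    have hnum : HasDerivAt (fun u : ℝ => C₂ * (2 * u - C₁)) (C₂ * 2) x := by
      have := (((hasDerivAt_id x).const_mul 2).sub_const C₁).const_mul C₂
      simpa using this
    have hdenne : S * sq ≠ 0 := (mul_pos hSpos hsqpos).ne'
    have hg₂ : HasDerivAt (fun u : ℝ => C₂ * (2 * u - C₁) / (S * Real.sqrt (u * (C₁ - u))))
        ((C₂ * 2 * (S * sq) - C₂ * (2 * x - C₁) * (S * (1 / (2 * sq) * (C₁ - 2 * x))))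
          / (S * sq) ^ 2) x := hnum.div hden hdenne
    have harctan : HasDerivAt
        (fun u : ℝ => Real.arctan (C₂ * (2 * u - C₁) / (S * Real.sqrt (u * (C₁ - u)))))
        (1 / (1 + (C₂ * (2 * x - C₁) / (S * sq)) ^ 2)
          * ((C₂ * 2 * (S * sq) - C₂ * (2 * x - C₁) * (S * (1 / (2 * sq) * (C₁ - 2 * x))))
            / (S * sq) ^ 2)) x :=
      (Real.hasDerivAt_arctan _).comp x hg₂
    have hF : HasDerivAt F
        (C₂ / Real.pi * (1 / Real.sqrt (1 - ((2 * x - C₁) / C₁) ^ 2) * (2 / C₁))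
          - 2 * C₂ ^ 2 / (Real.pi * S)
            * (1 / (1 + (C₂ * (2 * x - C₁) / (S * sq)) ^ 2)
              * ((C₂ * 2 * (S * sq) - C₂ * (2 * x - C₁) * (S * (1 / (2 * sq) * (C₁ - 2 * x))))
                / (S * sq) ^ 2))) x :=
      (harcsin.const_mul _).sub (harctan.const_mul _)
    -- now identify the derivative value with psi
    have hsq1 : Real.sqrt (1 - ((2 * x - C₁) / C₁) ^ 2) = 2 * sq / C₁ := by
      rw [show 1 - ((2 * x - C₁) / C₁) ^ 2 = (2 * sq / C₁) ^ 2 by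
        field_simp
        linear_combination (-4) * hsq2]
      exact Real.sqrt_sq (by positivity)
    have h2 : 1 + (C₂ * (2 * x - C₁) / (S * sq)) ^ 2
        = C₁ ^ 2 * (sq ^ 2 + C₂ ^ 2) / (S ^ 2 * sq ^ 2) := by
      field_simp
      linear_combination sq ^ 2 * hS2 + 4 * C₂ ^ 2 * hsq2
    have h1 : (C₂ * 2 * (S * sq) - C₂ * (2 * x - C₁) * (S * (1 / (2 * sq) * (C₁ - 2 * x))))
        / (S * sq) ^ 2 = C₂ * C₁ ^ 2 / (2 * S * sq ^ 3) := by
      field_simp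
      linear_combination 4 * hsq2
    have hpsi : psi C₁ C₂ x = C₂ * sq / (Real.pi * (C₂ ^ 2 + sq ^ 2)) := by
      rw [psi, hsq2]
    rw [hpsi]
    convert hF using 1
    rw [hsq1, h2, h1]
    have h3 : sq ^ 2 + C₂ ^ 2 ≠ 0 := by positivity
    field_simp
    ring
  -- integrability
  have hint : IntervalIntegrable (fun u => psi C₁ C₂ u) MeasureTheory.volume 0 C₁ := by
    apply ContinuousOn.intervalIntegrable
    apply ContinuousOn.div
    · exact (continuous_const.mul (Real.continuous_sqrt.comp (continuous_id.mul (continuous_const.sub continuous_id)))).continuousOn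
    · exact (continuous_const.mul (continuous_const.add (continuous_id.mul (continuous_const.sub continuous_id)))).continuousOn
    · intro u hu
      rw [uIcc_of_le hC₁.le] at hu
      have h0 : 0 ≤ u * (C₁ - u) := mul_nonneg hu.1 (by linarith [hu.2])
      positivity
  -- limit at 0
  have hsq0a : Tendsto (fun u : ℝ => S * Real.sqrt (u * (C₁ - u))) (nhdsWithin 0 (Ioi 0))
      (nhdsWithin 0 (Ioi 0)) := by
    apply tendsto_nhdsWithin_of_tendsto_nhds_of_eventually_within
    · have : Continuous fun u : ℝ => S * Real.sqrt (u * (C₁ - u)) :=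
        continuous_const.mul (Real.continuous_sqrt.comp (continuous_id.mul (continuous_const.sub continuous_id)))
      have h := (this.tendsto 0).mono_left (nhdsWithin_le_nhds : nhdsWithin (0:ℝ) (Ioi 0) ≤ _)
      simpa using h
    · filter_upwards [Ioo_mem_nhdsGT_of_mem (by constructor <;> [rfl; exact hC₁] : (0:ℝ) ∈ Ico 0 C₁)] with u hu
      have : 0 < u * (C₁ - u) := mul_pos hu.1 (by linarith [hu.2])
      have := Real.sqrt_pos.2 this
      exact mul_pos hSpos this
  have ha : Tendsto F (nhdsWithin 0 (Ioi 0)) (𝓝 (-(C₂ / 2) + C₂ ^ 2 / S)) := by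
    have p1 : Tendsto (fun u : ℝ => Real.arcsin ((2 * u - C₁) / C₁)) (nhdsWithin 0 (Ioi 0))
        (𝓝 (-(Real.pi / 2))) := by
      have hc : Continuous fun u : ℝ => Real.arcsin ((2 * u - C₁) / C₁) :=
        Real.continuous_arcsin.comp (((continuous_const.mul continuous_id).sub continuous_const).div_const C₁)
      have h := (hc.tendsto 0).mono_left (nhdsWithin_le_nhds : nhdsWithin (0:ℝ) (Ioi 0) ≤ _)
      have : (2 * (0:ℝ) - C₁) / C₁ = -1 := by field_simp; ring
      rw [this, Real.arcsin_neg_one] at h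
      exact h
    have p2 : Tendsto (fun u : ℝ => Real.arctan (C₂ * (2 * u - C₁) / (S * Real.sqrt (u * (C₁ - u)))))
        (nhdsWithin 0 (Ioi 0)) (𝓝 (-(Real.pi / 2))) := by
      have hbot : Tendsto (fun u : ℝ => C₂ * (2 * u - C₁) / (S * Real.sqrt (u * (C₁ - u))))
          (nhdsWithin 0 (Ioi 0)) atBot := by
        have hnum : Tendsto (fun u : ℝ => C₂ * (2 * u - C₁)) (nhdsWithin 0 (Ioi 0))
            (𝓝 (C₂ * (2 * 0 - C₁))) := by
          exact ((continuous_const.mul ((continuous_const.mul continuous_id).sub continuous_const)).tendsto 0).mono_left (nhdsWithin_le_nhds : nhdsWithin (0:ℝ) (Ioi 0) ≤ _)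
        have hC : C₂ * (2 * 0 - C₁) < 0 := by nlinarith
        have hinv : Tendsto (fun u : ℝ => (S * Real.sqrt (u * (C₁ - u)))⁻¹)
            (nhdsWithin 0 (Ioi 0)) atTop := hsq0a.inv_tendsto_nhdsGT_zero
        have := hnum.neg_mul_atTop hC hinv
        refine this.congr fun u => ?_
        rw [div_eq_mul_inv]
      have := Real.tendsto_arctan_atBot.comp hbot
      exact this.mono_right (nhdsWithin_le_nhds : nhdsWithin (-(Real.pi/2)) (Ioi (-(Real.pi/2))) ≤ _)
    have := ((p1.const_mul (C₂ / Real.pi)).sub (p2.const_mul (2 * C₂ ^ 2 / (Real.pi * S))))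
    convert this using 2
    field_simp
    ring
  -- limit at C₁
  have hsq1a : Tendsto (fun u : ℝ => S * Real.sqrt (u * (C₁ - u))) (nhdsWithin C₁ (Iio C₁))
      (nhdsWithin 0 (Ioi 0)) := by
    apply tendsto_nhdsWithin_of_tendsto_nhds_of_eventually_within
    · have : Continuous fun u : ℝ => S * Real.sqrt (u * (C₁ - u)) :=
        continuous_const.mul (Real.continuous_sqrt.comp (continuous_id.mul (continuous_const.sub continuous_id)))
      have h := (this.tendsto C₁).mono_left (nhdsWithin_le_nhds : nhdsWithin C₁ (Iio C₁) ≤ _)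
      simpa using h
    · filter_upwards [Ioo_mem_nhdsLT_of_mem (by constructor <;> [exact hC₁; rfl] : C₁ ∈ Ioc 0 C₁)] with u hu
      have : 0 < u * (C₁ - u) := mul_pos hu.1 (by linarith [hu.2])
      have := Real.sqrt_pos.2 this
      exact mul_pos hSpos this
  have hb : Tendsto F (nhdsWithin C₁ (Iio C₁)) (𝓝 (C₂ / 2 - C₂ ^ 2 / S)) := by
    have p1 : Tendsto (fun u : ℝ => Real.arcsin ((2 * u - C₁) / C₁)) (nhdsWithin C₁ (Iio C₁))
        (𝓝 (Real.pi / 2)) := by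
      have hc : Continuous fun u : ℝ => Real.arcsin ((2 * u - C₁) / C₁) :=
        Real.continuous_arcsin.comp (((continuous_const.mul continuous_id).sub continuous_const).div_const C₁)
      have h := (hc.tendsto C₁).mono_left (nhdsWithin_le_nhds : nhdsWithin C₁ (Iio C₁) ≤ _)
      have : (2 * C₁ - C₁) / C₁ = 1 := by field_simp; ring
      rw [this, Real.arcsin_one] at h
      exact h
    have p2 : Tendsto (fun u : ℝ => Real.arctan (C₂ * (2 * u - C₁) / (S * Real.sqrt (u * (C₁ - u)))))
        (nhdsWithin C₁ (Iio C₁)) (𝓝 (Real.pi / 2)) := by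
      have htop : Tendsto (fun u : ℝ => C₂ * (2 * u - C₁) / (S * Real.sqrt (u * (C₁ - u))))
          (nhdsWithin C₁ (Iio C₁)) atTop := by
        have hnum : Tendsto (fun u : ℝ => C₂ * (2 * u - C₁)) (nhdsWithin C₁ (Iio C₁))
            (𝓝 (C₂ * (2 * C₁ - C₁))) :=
          ((continuous_const.mul ((continuous_const.mul continuous_id).sub continuous_const)).tendsto C₁).mono_left (nhdsWithin_le_nhds : nhdsWithin C₁ (Iio C₁) ≤ _)
        have hC : 0 < C₂ * (2 * C₁ - C₁) := by nlinarith
        have hinv : Tendsto (fun u : ℝ => (S * Real.sqrt (u * (C₁ - u)))⁻¹)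
            (nhdsWithin C₁ (Iio C₁)) atTop := hsq1a.inv_tendsto_nhdsGT_zero
        have := hnum.pos_mul_atTop hC hinv
        refine this.congr fun u => ?_
        rw [div_eq_mul_inv]
      have := Real.tendsto_arctan_atTop.comp htop
      exact this.mono_right (nhdsWithin_le_nhds : nhdsWithin (Real.pi/2) (Iio (Real.pi/2)) ≤ _)
    have := ((p1.const_mul (C₂ / Real.pi)).sub (p2.const_mul (2 * C₂ ^ 2 / (Real.pi * S))))
    convert this using 2
    field_simp
  have key := intervalIntegral.integral_eq_sub_of_hasDerivAt_of_tendsto hC₁ hderiv hint ha hb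
  rw [key]
  field_simp
  ring

/-- The total mass of the representing measure dλ^D = ψ du + r δ_{ξ_p} equals C₂. -/
theorem stmt5 (C₁ C₂ : ℝ) (hC₁ : 0 < C₁) (hC₂ : 0 < C₂) :
    (∫ u in (0:ℝ)..C₁, psi C₁ C₂ u) + rres C₁ C₂ = C₂ := by
  have hSpos : 0 < Real.sqrt (C₁ ^ 2 + 4 * C₂ ^ 2) := Real.sqrt_pos.2 (by positivity)
  have hS2 : Real.sqrt (C₁ ^ 2 + 4 * C₂ ^ 2) ^ 2 = C₁ ^ 2 + 4 * C₂ ^ 2 :=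
    Real.sq_sqrt (by positivity)
  have hr : rres C₁ C₂ = 2 * C₂ ^ 2 / Real.sqrt (C₁ ^ 2 + 4 * C₂ ^ 2) := by
    rw [rres]
    have h1 : xip C₁ C₂ * (xip C₁ C₂ - C₁) = C₂ ^ 2 := by
      rw [xip]; field_simp; linear_combination hS2
    have h2 : 2 * xip C₁ C₂ - C₁ = Real.sqrt (C₁ ^ 2 + 4 * C₂ ^ 2) := by
      rw [xip]; ring
    rw [h1, h2, Real.sqrt_sq hC₂.le]
    ring
  rw [psi_integral C₁ C₂ hC₁ hC₂, hr]
  ring
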